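/- For every integer m ≥ 2 there exist real polynomials P, Q, R, N in two variables, with P and R of total degree at most m−1 and Q and N of total degree at most m, such that for all real x₁, x₂, writing y₁ = x₁² − x₂² and y₂ = 2x₁x₂: if m is even then x₁^{2m} − x₂^{2m} = (x₁² + x₂²)·P(y₁,y₂) and x₁^{2m} + x₂^{2m} = N(y₁,y₂); and if m is odd then x₁^{2m} − x₂^{2m} = Q(y₁,y₂) and x₁^{2m} + x₂^{2m} = (x₁² + x₂²)·R(y₁,y₂). -/

import Mathlib

open MvPolynomial Finset

noncomputable def S2 : MvPolynomial (Fin 2) ℝ := X 0 ^ 2 + X 1 ^ 2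

lemma S2_deg : S2.totalDegree ≤ 2 := by
  refine le_trans (totalDegree_add _ _) ?_
  simp [S2, totalDegree_X_pow]

lemma deg_bound (c : ℕ → ℝ) (e : ℕ → ℕ) (n B : ℕ) (h : ∀ k < n, 2 * e k + k ≤ B) :
    (∑ k ∈ Finset.range n, C (c k) * S2 ^ (e k) * X 0 ^ k).totalDegree ≤ B := by
  refine le_trans (totalDegree_finset_sum _ _) (Finset.sup_le fun k hk => ?_)
  have hk' := Finset.mem_range.mp hk
  calc (C (c k) * S2 ^ (e k) * X 0 ^ k).totalDegree
      ≤ (C (c k) * S2 ^ (e k)).totalDegree + (X 0 ^ k : MvPolynomial (Fin 2) ℝ).totalDegree :=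
        totalDegree_mul _ _
    _ ≤ ((C (c k) : MvPolynomial (Fin 2) ℝ).totalDegree + (S2 ^ (e k)).totalDegree) + k := by
        gcongr
        · exact totalDegree_mul _ _
        · exact le_of_eq (totalDegree_X_pow _ _)
    _ ≤ (0 + e k * 2) + k := by
        gcongr
        · exact le_of_eq (totalDegree_C _)
        · exact le_trans (totalDegree_pow _ _) (Nat.mul_le_mul_left _ S2_deg)
    _ ≤ B := by have := h k hk'; omega

lemma binom (m : ℕ) (ε a b : ℝ) :
    a ^ m + ε * b ^ m =
      ∑ k ∈ Finset.range (m + 1),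
        ((1 + ε * (-1 : ℝ) ^ k) * m.choose k / 2 ^ m) * ((a + b) ^ (m - k) * (a - b) ^ k) := by
  have h2 : (2 : ℝ) ^ m ≠ 0 := by positivity
  apply mul_left_cancel₀ h2
  have e1 : (2:ℝ) ^ m * (a ^ m + ε * b ^ m) = ((a-b) + (a+b)) ^ m + ε * ((-(a-b)) + (a+b)) ^ m := by
    rw [show (a-b)+(a+b) = 2*a by ring, show (-(a-b))+(a+b) = 2*b by ring, mul_pow, mul_pow]
    ring
  rw [e1, add_pow, add_pow, Finset.mul_sum, Finset.mul_sum, ← Finset.sum_add_distrib]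
  refine Finset.sum_congr rfl fun k hk => ?_
  rw [neg_pow]
  field_simp

lemma eval_S2 (d t : ℝ) : MvPolynomial.eval ![d, t] S2 = d ^ 2 + t ^ 2 := by
  simp [S2]

lemma helper_unfac (m : ℕ) (ε s d t : ℝ) (hst : s ^ 2 = d ^ 2 + t ^ 2)
    (hpar : ∀ k ≤ m, (1 + ε * (-1 : ℝ) ^ k) ≠ 0 → 2 * ((m - k) / 2) = m - k) :
    MvPolynomial.eval ![d, t]
        (∑ k ∈ Finset.range (m + 1),
          C ((1 + ε * (-1 : ℝ) ^ k) * m.choose k / 2 ^ m) * S2 ^ ((m - k) / 2) * X 0 ^ k)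
      = ∑ k ∈ Finset.range (m + 1),
          ((1 + ε * (-1 : ℝ) ^ k) * m.choose k / 2 ^ m) * (s ^ (m - k) * d ^ k) := by
  rw [map_sum]
  refine Finset.sum_congr rfl fun k hk => ?_
  have hk' : k ≤ m := Nat.lt_succ_iff.mp (Finset.mem_range.mp hk)
  simp only [map_mul, map_pow, eval_C, eval_X, eval_S2, Matrix.cons_val_zero]
  by_cases hz : (1 + ε * (-1 : ℝ) ^ k) = 0
  · simp [hz]
  · rw [← hst, ← pow_mul, hpar k hk' hz]
    ring

lemma helper_fac (m : ℕ) (ε s d t : ℝ) (hst : s ^ 2 = d ^ 2 + t ^ 2)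
    (hpar : ∀ k < m, (1 + ε * (-1 : ℝ) ^ k) ≠ 0 → 2 * ((m - 1 - k) / 2) + 1 = m - k)
    (hz : (1 + ε * (-1 : ℝ) ^ m) = 0) :
    s * MvPolynomial.eval ![d, t]
        (∑ k ∈ Finset.range m,
          C ((1 + ε * (-1 : ℝ) ^ k) * m.choose k / 2 ^ m) * S2 ^ ((m - 1 - k) / 2) * X 0 ^ k)
      = ∑ k ∈ Finset.range (m + 1),
          ((1 + ε * (-1 : ℝ) ^ k) * m.choose k / 2 ^ m) * (s ^ (m - k) * d ^ k) := by
  rw [Finset.sum_range_succ, hz, map_sum, Finset.mul_sum]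
  simp only [zero_mul, zero_div, add_zero]
  refine Finset.sum_congr rfl fun k hk => ?_
  have hk' : k < m := Finset.mem_range.mp hk
  simp only [map_mul, map_pow, eval_C, eval_X, eval_S2, Matrix.cons_val_zero]
  by_cases hz' : (1 + ε * (-1 : ℝ) ^ k) = 0
  · simp [hz']
  · rw [← hst, ← pow_mul, ← hpar k hk' hz', pow_succ]
    ring

lemma coeff_zero_of_even {k : ℕ} (hk : Even k) : (1 + (-1) * (-1 : ℝ) ^ k) = 0 := by
  rw [hk.neg_one_pow]; ring

lemma coeff_zero_of_odd {k : ℕ} (hk : Odd k) : (1 + 1 * (-1 : ℝ) ^ k) = 0 := by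
  rw [hk.neg_one_pow]; ring

/-- polynomial identities for `x₁^{2m} ± x₂^{2m}` in the variables
`y₁ = x₁² − x₂²`, `y₂ = 2x₁x₂`. -/
theorem stmt_6 (m : ℕ) (hm : 2 ≤ m) :
    ∃ P Q R N : MvPolynomial (Fin 2) ℝ,
      P.totalDegree ≤ m - 1 ∧ R.totalDegree ≤ m - 1 ∧
      Q.totalDegree ≤ m ∧ N.totalDegree ≤ m ∧
      ∀ x₁ x₂ : ℝ,
        (Even m →
          x₁ ^ (2 * m) - x₂ ^ (2 * m) =
            (x₁ ^ 2 + x₂ ^ 2) * MvPolynomial.eval ![x₁ ^ 2 - x₂ ^ 2, 2 * x₁ * x₂] P ∧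
          x₁ ^ (2 * m) + x₂ ^ (2 * m) =
            MvPolynomial.eval ![x₁ ^ 2 - x₂ ^ 2, 2 * x₁ * x₂] N) ∧
        (Odd m →
          x₁ ^ (2 * m) - x₂ ^ (2 * m) =
            MvPolynomial.eval ![x₁ ^ 2 - x₂ ^ 2, 2 * x₁ * x₂] Q ∧
          x₁ ^ (2 * m) + x₂ ^ (2 * m) =
            (x₁ ^ 2 + x₂ ^ 2) * MvPolynomial.eval ![x₁ ^ 2 - x₂ ^ 2, 2 * x₁ * x₂] R) := by
  classical
  set cp : ℕ → ℝ := fun k => (1 + 1 * (-1 : ℝ) ^ k) * m.choose k / 2 ^ m with hcp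
  set cm : ℕ → ℝ := fun k => (1 + (-1) * (-1 : ℝ) ^ k) * m.choose k / 2 ^ m with hcm
  refine ⟨∑ k ∈ Finset.range m, C (cm k) * S2 ^ ((m - 1 - k) / 2) * X 0 ^ k,
          ∑ k ∈ Finset.range (m + 1), C (cm k) * S2 ^ ((m - k) / 2) * X 0 ^ k,
          ∑ k ∈ Finset.range m, C (cp k) * S2 ^ ((m - 1 - k) / 2) * X 0 ^ k,
          ∑ k ∈ Finset.range (m + 1), C (cp k) * S2 ^ ((m - k) / 2) * X 0 ^ k,
          deg_bound _ _ _ _ (fun k hk => by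
            have := Nat.div_mul_le_self (m - 1 - k) 2; omega),
          deg_bound _ _ _ _ (fun k hk => by
            have := Nat.div_mul_le_self (m - 1 - k) 2; omega),
          deg_bound _ _ _ _ (fun k hk => by
            have := Nat.div_mul_le_self (m - k) 2; omega),
          deg_bound _ _ _ _ (fun k hk => by
            have := Nat.div_mul_le_self (m - k) 2; omega),
          fun x₁ x₂ => ?_⟩
  have hst : (x₁ ^ 2 + x₂ ^ 2) ^ 2 = (x₁ ^ 2 - x₂ ^ 2) ^ 2 + (2 * x₁ * x₂) ^ 2 := by ring
  have ha : x₁ ^ (2 * m) = (x₁ ^ 2) ^ m := by rw [← pow_mul]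
  have hb : x₂ ^ (2 * m) = (x₂ ^ 2) ^ m := by rw [← pow_mul]
  have hsum : ∀ ε : ℝ, (x₁ ^ 2) ^ m + ε * (x₂ ^ 2) ^ m =
      ∑ k ∈ Finset.range (m + 1),
        ((1 + ε * (-1 : ℝ) ^ k) * m.choose k / 2 ^ m) *
          ((x₁ ^ 2 + x₂ ^ 2) ^ (m - k) * (x₁ ^ 2 - x₂ ^ 2) ^ k) :=
    fun ε => binom m ε (x₁ ^ 2) (x₂ ^ 2)
  constructor
  · intro hme
    obtain ⟨c, hc⟩ := hme
    constructor
    · -- x₁^(2m) - x₂^(2m) = s * eval P, coefficients cm (ε = -1)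
      rw [ha, hb, show (x₁^2)^m - (x₂^2)^m = (x₁^2)^m + (-1) * (x₂^2)^m by ring, hsum (-1)]
      refine (helper_fac m (-1) _ _ _ hst (fun k hk hz => ?_) ?_).symm
      · rcases Nat.even_or_odd k with he | ho
        · exact absurd (coeff_zero_of_even he) hz
        · obtain ⟨j, hj⟩ := ho; omega
      · exact coeff_zero_of_even (by exact ⟨c, hc⟩)
    · rw [ha, hb, show (x₁^2)^m + (x₂^2)^m = (x₁^2)^m + 1 * (x₂^2)^m by ring, hsum 1]
      refine (helper_unfac m 1 _ _ _ hst (fun k hk hz => ?_)).symm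
      rcases Nat.even_or_odd k with he | ho
      · obtain ⟨j, hj⟩ := he; omega
      · exact absurd (coeff_zero_of_odd ho) hz
  · intro hmo
    obtain ⟨c, hc⟩ := hmo
    constructor
    · rw [ha, hb, show (x₁^2)^m - (x₂^2)^m = (x₁^2)^m + (-1) * (x₂^2)^m by ring, hsum (-1)]
      refine (helper_unfac m (-1) _ _ _ hst (fun k hk hz => ?_)).symm
      rcases Nat.even_or_odd k with he | ho
      · exact absurd (coeff_zero_of_even he) hz
      · obtain ⟨j, hj⟩ := ho; omega
    · rw [ha, hb, show (x₁^2)^m + (x₂^2)^m = (x₁^2)^m + 1 * (x₂^2)^m by ring, hsum 1]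
      refine (helper_fac m 1 _ _ _ hst (fun k hk hz => ?_) ?_).symm
      · rcases Nat.even_or_odd k with he | ho
        · obtain ⟨j, hj⟩ := he; omega
        · exact absurd (coeff_zero_of_odd ho) hz
      · exact coeff_zero_of_odd ⟨c, hc⟩
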